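/- Cumulant bound for compactly supported distributions: if μ is a Borel probability measure on ℝ with support contained in [-c, c], then for every integer k ≥ 1 the k-th cumulant of μ, i.e. the k-th derivative at t = 0 of the cumulant generating function K(t) = log ∫ e^{tx} dμ(x), satisfies |K^{(k)}(0)| ≤ (2ck)^k. -/

import Mathlib

open MeasureTheory Set

section CBaux

open Complex

variable {c : ℝ} (hc : 0 < c) (μ : Measure ℝ) [IsProbabilityMeasure μ]
  (hμ : ∀ᵐ x ∂μ, x ∈ Icc (-c) c)

section aux

lemma CB_zre_mul (z : ℂ) (x : ℝ) : (z * x).re = z.re * x := by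
  simp [Complex.mul_re]

include hμ in
lemma CB_int_exp (z : ℂ) : Integrable (fun x : ℝ => Complex.exp (z * x)) μ := by
  refine ⟨(Complex.continuous_exp.comp (continuous_const.mul
    Complex.continuous_ofReal)).aestronglyMeasurable, ?_⟩
  refine HasFiniteIntegral.of_bounded (C := Real.exp (|z.re| * c)) ?_
  filter_upwards [hμ] with x hx
  rw [Complex.norm_exp, CB_zre_mul]
  refine Real.exp_le_exp.2 ?_
  calc z.re * x ≤ |z.re * x| := le_abs_self _
    _ = |z.re| * |x| := abs_mul _ _
    _ ≤ |z.re| * c := by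
        have := abs_le.2 ⟨hx.1, hx.2⟩
        nlinarith [abs_nonneg z.re, abs_nonneg x]

include hc hμ in
lemma CB_int_mul_exp (z : ℂ) :
    Integrable (fun x : ℝ => (x : ℂ) * Complex.exp (z * x)) μ := by
  refine ⟨(Complex.continuous_ofReal.mul (Complex.continuous_exp.comp
    (continuous_const.mul Complex.continuous_ofReal))).aestronglyMeasurable, ?_⟩
  refine HasFiniteIntegral.of_bounded (C := c * Real.exp (|z.re| * c)) ?_
  filter_upwards [hμ] with x hx
  have hxc : |x| ≤ c := abs_le.2 ⟨hx.1, hx.2⟩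
  rw [norm_mul, Complex.norm_exp,
    Complex.norm_real, Real.norm_eq_abs, CB_zre_mul]
  have h1 : Real.exp (z.re * x) ≤ Real.exp (|z.re| * c) := by
    refine Real.exp_le_exp.2 ?_
    calc z.re * x ≤ |z.re * x| := le_abs_self _
      _ = |z.re| * |x| := abs_mul _ _
      _ ≤ |z.re| * c := by nlinarith [abs_nonneg z.re, abs_nonneg x]
  exact mul_le_mul hxc h1 (Real.exp_pos _).le hc.le

end aux

noncomputable def CB_F (μ : Measure ℝ) : ℂ → ℂ := fun z => ∫ x, Complex.exp (z * x) ∂μ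

include hc hμ in
lemma CB_F_hasDerivAt (z₀ : ℂ) :
    HasDerivAt (CB_F μ) (∫ x, (x : ℂ) * Complex.exp (z₀ * x) ∂μ) z₀ := by
  have h := hasDerivAt_integral_of_dominated_loc_of_deriv_le (μ := μ)
    (F := fun (z : ℂ) (x : ℝ) => Complex.exp (z * x))
    (F' := fun (z : ℂ) (x : ℝ) => (x : ℂ) * Complex.exp (z * x))
    (x₀ := z₀) (bound := fun _ => c * Real.exp ((‖z₀‖ + 1) * c))
    (s := Metric.ball z₀ 1) (Metric.ball_mem_nhds z₀ one_pos)
    (.of_forall fun z => (Complex.continuous_exp.comp (continuous_const.mul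
      Complex.continuous_ofReal)).aestronglyMeasurable)
    (CB_int_exp μ hμ z₀)
    ((Complex.continuous_ofReal.mul (Complex.continuous_exp.comp
      (continuous_const.mul Complex.continuous_ofReal))).aestronglyMeasurable)
    ?_ (integrable_const _) ?_
  · exact h.2
  · filter_upwards [hμ] with x hx z hz
    have hxc : |x| ≤ c := abs_le.2 ⟨hx.1, hx.2⟩
    have hzn : ‖z‖ ≤ ‖z₀‖ + 1 := by
      have := mem_ball_iff_norm.1 hz
      have h2 : ‖z‖ - ‖z₀‖ ≤ ‖z - z₀‖ := norm_sub_norm_le _ _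
      linarith
    rw [norm_mul, Complex.norm_exp,
      Complex.norm_real, Real.norm_eq_abs, CB_zre_mul]
    have h1 : Real.exp (z.re * x) ≤ Real.exp ((‖z₀‖ + 1) * c) := by
      refine Real.exp_le_exp.2 ?_
      have hre : |z.re| ≤ ‖z₀‖ + 1 := (Complex.abs_re_le_norm z).trans hzn
      calc z.re * x ≤ |z.re * x| := le_abs_self _
        _ = |z.re| * |x| := abs_mul _ _
        _ ≤ (‖z₀‖ + 1) * c := by nlinarith [abs_nonneg z.re, abs_nonneg x, norm_nonneg z₀]
    exact mul_le_mul hxc h1 (Real.exp_pos _).le hc.le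
  · filter_upwards with x z _
    have : HasDerivAt (fun z : ℂ => z * x) (x : ℂ) z := by
      simpa using (hasDerivAt_id z).mul_const (x : ℂ)
    simpa [mul_comm] using this.cexp

include hμ in
lemma CB_int_rexp (t : ℝ) : Integrable (fun x : ℝ => Real.exp (t * x)) μ := by
  refine ⟨(Real.continuous_exp.comp (continuous_const.mul continuous_id)).aestronglyMeasurable, ?_⟩
  refine HasFiniteIntegral.of_bounded (C := Real.exp (|t| * c)) ?_
  filter_upwards [hμ] with x hx
  rw [Real.norm_eq_abs, Real.abs_exp]
  refine Real.exp_le_exp.2 ?_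
  have hxc : |x| ≤ c := abs_le.2 ⟨hx.1, hx.2⟩
  calc t * x ≤ |t * x| := le_abs_self _
    _ = |t| * |x| := abs_mul _ _
    _ ≤ |t| * c := by nlinarith [abs_nonneg t, abs_nonneg x]

include hμ in
lemma CB_r_pos (t : ℝ) : 0 < ∫ x, Real.exp (t * x) ∂μ := by
  have h1 : Real.exp (-(|t| * c)) ≤ ∫ x, Real.exp (t * x) ∂μ := by
    calc Real.exp (-(|t| * c)) = ∫ _, Real.exp (-(|t| * c)) ∂μ := by simp
      _ ≤ ∫ x, Real.exp (t * x) ∂μ := by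
          refine integral_mono_ae (integrable_const _) (CB_int_rexp μ hμ t) ?_
          filter_upwards [hμ] with x hx
          refine Real.exp_le_exp.2 ?_
          have hxc : |x| ≤ c := abs_le.2 ⟨hx.1, hx.2⟩
          have : |t * x| ≤ |t| * c := by
            rw [abs_mul]; nlinarith [abs_nonneg t, abs_nonneg x]
          have := neg_abs_le (t * x)
          linarith
  exact lt_of_lt_of_le (Real.exp_pos _) h1

include hμ in
lemma CB_F_ofReal (t : ℝ) : CB_F μ t = ((∫ x, Real.exp (t * x) ∂μ : ℝ) : ℂ) := by
  rw [CB_F]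
  have h : ∀ x : ℝ, Complex.exp (t * x) = ((Real.exp (t * x) : ℝ) : ℂ) := fun x => by
    rw [← Complex.ofReal_mul, Complex.ofReal_exp]
  rw [integral_congr_ae (.of_forall h)]
  exact integral_ofReal

include hc hμ in
lemma CB_F_re_lower {z : ℂ} (him : |z.im| * c ≤ Real.pi / 2) :
    Real.exp (-(|z.re| * c)) * Real.cos (|z.im| * c) ≤ (CB_F μ z).re := by
  have hint := CB_int_exp μ hμ z
  have hre : (CB_F μ z).re = ∫ x, (Complex.exp (z * x)).re ∂μ := by
    rw [CB_F, ← RCLike.re_eq_complex_re, ← integral_re hint]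
  rw [hre]
  calc Real.exp (-(|z.re| * c)) * Real.cos (|z.im| * c)
      = ∫ _, Real.exp (-(|z.re| * c)) * Real.cos (|z.im| * c) ∂μ := by simp
    _ ≤ ∫ x, (Complex.exp (z * x)).re ∂μ := by
        refine integral_mono_ae (integrable_const _) hint.re ?_
        filter_upwards [hμ] with x hx
        have hxc : |x| ≤ c := abs_le.2 ⟨hx.1, hx.2⟩
        rw [Complex.exp_re]
        have him' : (z * x).im = z.im * x := by simp [Complex.mul_im]
        rw [CB_zre_mul, him']
        have h1 : Real.exp (-(|z.re| * c)) ≤ Real.exp (z.re * x) := by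
          refine Real.exp_le_exp.2 ?_
          have : |z.re * x| ≤ |z.re| * c := by
            rw [abs_mul]; nlinarith [abs_nonneg z.re, abs_nonneg x]
          have := neg_abs_le (z.re * x)
          linarith
        have h2 : Real.cos (|z.im| * c) ≤ Real.cos (z.im * x) := by
          rw [← Real.cos_abs (z.im * x)]
          refine Real.cos_le_cos_of_nonneg_of_le_pi (abs_nonneg _) (by linarith [Real.pi_pos]) ?_
          rw [abs_mul]; nlinarith [abs_nonneg z.im, abs_nonneg x]
        have hc2 : 0 ≤ Real.cos (|z.im| * c) := by
          refine Real.cos_nonneg_of_mem_Icc ⟨?_, him⟩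
          have := mul_nonneg (abs_nonneg z.im) hc.le
          linarith [Real.pi_pos]
        nlinarith [Real.exp_pos (z.re * x), Real.exp_pos (-(|z.re| * c))]

include hμ in
lemma CB_F_norm_le (z : ℂ) : ‖CB_F μ z‖ ≤ Real.exp (|z.re| * c) := by
  calc ‖CB_F μ z‖ ≤ ∫ x, ‖Complex.exp (z * x)‖ ∂μ := norm_integral_le_integral_norm _
    _ ≤ ∫ _, Real.exp (|z.re| * c) ∂μ := by
        refine integral_mono_ae (CB_int_exp μ hμ z).norm (integrable_const _) ?_
        filter_upwards [hμ] with x hx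
        have hxc : |x| ≤ c := abs_le.2 ⟨hx.1, hx.2⟩
        rw [Complex.norm_exp, CB_zre_mul]
        refine Real.exp_le_exp.2 ?_
        calc z.re * x ≤ |z.re * x| := le_abs_self _
          _ = |z.re| * |x| := abs_mul _ _
          _ ≤ |z.re| * c := by nlinarith [abs_nonneg z.re, abs_nonneg x]
    _ = Real.exp (|z.re| * c) := by simp

noncomputable def CB_G (μ : Measure ℝ) : ℂ → ℂ := fun z => Complex.log (CB_F μ z)

include hc hμ in
lemma CB_F_re_pos {z : ℂ} (him : |z.im| * c < Real.pi / 2) : 0 < (CB_F μ z).re := by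
  refine lt_of_lt_of_le ?_ (CB_F_re_lower hc μ hμ him.le)
  have h2 : 0 < Real.cos (|z.im| * c) := by
    refine Real.cos_pos_of_mem_Ioo ⟨?_, him⟩
    have := mul_nonneg (abs_nonneg z.im) hc.le
    linarith [Real.pi_pos]
  positivity

include hc hμ in
lemma CB_G_diffAt {z : ℂ} (him : |z.im| * c < Real.pi / 2) :
    DifferentiableAt ℂ (CB_G μ) z := by
  refine DifferentiableAt.clog ?_ ?_
  · exact (CB_F_hasDerivAt hc μ hμ z).differentiableAt
  · exact Complex.mem_slitPlane_iff.2 (Or.inl (CB_F_re_pos hc μ hμ him))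

include hc hμ in
lemma CB_G_norm_le {z : ℂ} (hz : z ∈ Metric.closedBall (0 : ℂ) (1 / c)) :
    ‖CB_G μ z‖ ≤ 6 := by
  have hzn : ‖z‖ ≤ 1 / c := by simpa using Metric.mem_closedBall.1 hz
  have hre : |z.re| * c ≤ 1 := by
    have h1 : |z.re| ≤ 1 / c := (Complex.abs_re_le_norm z).trans hzn
    calc |z.re| * c ≤ (1 / c) * c := by nlinarith
      _ = 1 := by field_simp
  have him : |z.im| * c ≤ 1 := by
    have h1 : |z.im| ≤ 1 / c := (Complex.abs_im_le_norm z).trans hzn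
    calc |z.im| * c ≤ (1 / c) * c := by nlinarith
      _ = 1 := by field_simp
  set w := CB_F μ z with hw
  have hupper : ‖w‖ ≤ Real.exp 1 := by
    refine (CB_F_norm_le μ hμ z).trans (Real.exp_le_exp.2 hre)
  have hlow : Real.exp (-1) * (1 / 2) ≤ w.re := by
    refine le_trans ?_ (CB_F_re_lower hc μ hμ (him.trans (by linarith [Real.pi_gt_three])))
    have h1 : Real.exp (-1) ≤ Real.exp (-(|z.re| * c)) :=
      Real.exp_le_exp.2 (by linarith)
    have h2 : (1 / 2 : ℝ) ≤ Real.cos (|z.im| * c) := by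
      rw [← Real.cos_pi_div_three]
      refine Real.cos_le_cos_of_nonneg_of_le_pi
        (mul_nonneg (abs_nonneg _) hc.le) ?_ ?_
      · linarith [Real.pi_pos]
      · linarith [Real.pi_gt_three]
    have h3 : (0:ℝ) < Real.cos (|z.im| * c) := by linarith
    nlinarith [Real.exp_pos (-1), Real.exp_pos (-(|z.re| * c))]
  have habs_low : Real.exp (-1) * (1 / 2) ≤ ‖w‖ :=
    hlow.trans ((Complex.abs_re_le_norm w).trans' (le_abs_self _))
  have hlog : |Real.log (‖w‖)| ≤ 1 + Real.log 2 := by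
    have hwpos : 0 < ‖w‖ := lt_of_lt_of_le (by positivity) habs_low
    rw [abs_le]
    constructor
    · have := Real.log_le_log (by positivity) habs_low
      rw [Real.log_mul (Real.exp_ne_zero _) (by norm_num), Real.log_exp] at this
      have h4 : Real.log (1 / 2 : ℝ) = -Real.log 2 := by
        rw [one_div, Real.log_inv]
      linarith
    · have := Real.log_le_log hwpos hupper
      rw [Real.log_exp] at this
      have h5 : (0:ℝ) ≤ Real.log 2 := Real.log_nonneg (by norm_num)
      linarith
  have harg : |(Complex.log w).im| ≤ Real.pi := by
    rw [Complex.log_im]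
    exact Complex.abs_arg_le_pi w
  calc ‖CB_G μ z‖ = ‖Complex.log w‖ := by rw [CB_G]
    _ ≤ |(Complex.log w).re| + |(Complex.log w).im| := Complex.norm_le_abs_re_add_abs_im _
    _ ≤ (1 + Real.log 2) + Real.pi := by
        refine add_le_add ?_ harg
        rw [Complex.log_re]
        exact hlog
    _ ≤ 6 := by
        have h6 : Real.log 2 < 1 := by
          have := Real.log_two_lt_d9
          linarith
        linarith [Real.pi_le_four]

include hc hμ in
lemma CB_G_diffOn :
    DifferentiableOn ℂ (CB_G μ) (Metric.closedBall (0 : ℂ) (1 / c)) := by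
  intro z hz
  refine (CB_G_diffAt hc μ hμ ?_).differentiableWithinAt
  have hzn : ‖z‖ ≤ 1 / c := by simpa using Metric.mem_closedBall.1 hz
  have h1 : |z.im| ≤ 1 / c := (Complex.abs_im_le_norm z).trans hzn
  have : |z.im| * c ≤ 1 := by
    calc |z.im| * c ≤ (1 / c) * c := by nlinarith
      _ = 1 := by field_simp
  linarith [Real.pi_gt_three]

include hc hμ in
lemma CB_coeff_bound (n : ℕ) :
    ‖cauchyPowerSeries (CB_G μ) 0 (1 / c) n‖ ≤ 6 * c ^ n := by
  have h := norm_cauchyPowerSeries_le (CB_G μ) 0 (1 / c) n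
  have hcont : Continuous fun θ : ℝ => CB_G μ (circleMap 0 (1 / c) θ) := by
    refine (CB_G_diffOn hc μ hμ).continuousOn.comp_continuous
      (continuous_circleMap 0 (1 / c)) fun θ => ?_
    have := circleMap_mem_sphere (0 : ℂ) (by positivity : (0:ℝ) ≤ 1 / c) θ
    exact Metric.sphere_subset_closedBall this
  have hint : ∫ θ : ℝ in (0)..2 * Real.pi, ‖CB_G μ (circleMap 0 (1 / c) θ)‖ ≤
      2 * Real.pi * 6 := by
    calc ∫ θ : ℝ in (0)..2 * Real.pi, ‖CB_G μ (circleMap 0 (1 / c) θ)‖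
        ≤ ∫ _ : ℝ in (0)..2 * Real.pi, (6 : ℝ) := by
          refine intervalIntegral.integral_mono_on (by positivity) 
            (hcont.norm.intervalIntegrable 0 (2 * Real.pi)) intervalIntegrable_const fun θ _ => ?_
          refine CB_G_norm_le hc μ hμ ?_
          have := circleMap_mem_sphere (0 : ℂ) (by positivity : (0:ℝ) ≤ 1 / c) θ
          exact Metric.sphere_subset_closedBall this
      _ = 2 * Real.pi * 6 := by simp [mul_comm]
  have habs : |1 / c|⁻¹ = c := by
    rw [abs_of_pos (by positivity : (0:ℝ) < 1 / c)]
    field_simp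
  rw [habs] at h
  refine h.trans ?_
  have hπ : (0:ℝ) < 2 * Real.pi := by positivity
  have h2 : (2 * Real.pi)⁻¹ * ∫ θ : ℝ in (0)..2 * Real.pi,
      ‖CB_G μ (circleMap 0 (1 / c) θ)‖ ≤ 6 := by
    rw [inv_mul_le_iff₀ hπ]
    linarith
  have hcn : (0:ℝ) ≤ c ^ n := by positivity
  calc ((2 * Real.pi)⁻¹ * ∫ θ : ℝ in (0)..2 * Real.pi,
        ‖CB_G μ (circleMap 0 (1 / c) θ)‖) * c ^ n ≤ 6 * c ^ n := by
        refine mul_le_mul_of_nonneg_right h2 hcn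

include hc hμ in
lemma CB_iteratedDeriv_G_bound (k : ℕ) :
    ‖iteratedDeriv k (CB_G μ) 0‖ ≤ (k.factorial : ℝ) * (6 * c ^ k) := by
  set R : NNReal := ⟨1 / c, by positivity⟩ with hR
  have hRpos : (0 : NNReal) < R := by
    rw [← NNReal.coe_lt_coe]
    show (0:ℝ) < 1 / c
    positivity
  have hps : HasFPowerSeriesOnBall (CB_G μ) (cauchyPowerSeries (CB_G μ) 0 R) 0 R :=
    (CB_G_diffOn hc μ hμ).hasFPowerSeriesOnBall hRpos
  have h1 : iteratedDeriv k (CB_G μ) 0 =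
      iteratedFDeriv ℂ k (CB_G μ) 0 (fun _ => 1) := iteratedDeriv_eq_iteratedFDeriv
  have h2 := hps.factorial_smul (1 : ℂ) k
  rw [h1, ← h2]
  have h3 : ‖(k.factorial : ℕ) • cauchyPowerSeries (CB_G μ) 0 R k (fun _ => (1:ℂ))‖
      = (k.factorial : ℝ) * ‖cauchyPowerSeries (CB_G μ) 0 R k (fun _ => (1:ℂ))‖ := by
    rw [← Nat.cast_smul_eq_nsmul ℝ, norm_smul]
    simp
  rw [h3]
  have h4 : ‖cauchyPowerSeries (CB_G μ) 0 R k (fun _ => (1:ℂ))‖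
      ≤ ‖cauchyPowerSeries (CB_G μ) 0 (1 / c) k‖ := by
    calc ‖cauchyPowerSeries (CB_G μ) 0 R k (fun _ => (1:ℂ))‖
        ≤ ‖cauchyPowerSeries (CB_G μ) 0 (1 / c) k‖ * ∏ _i : Fin k, ‖(1:ℂ)‖ :=
          (cauchyPowerSeries (CB_G μ) 0 ((R : ℝ)) k).le_opNorm (fun _ => (1:ℂ))
      _ = ‖cauchyPowerSeries (CB_G μ) 0 (1 / c) k‖ := by simp
  have h5 := (h4.trans (CB_coeff_bound hc μ hμ k))
  have : (0:ℝ) ≤ (k.factorial : ℝ) := by positivity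
  nlinarith [norm_nonneg (cauchyPowerSeries (CB_G μ) 0 (1 / c) k (fun _ => (1:ℂ)))]

include hc hμ in
lemma CB_deriv_iter_analytic (n : ℕ) :
    AnalyticOnNhd ℂ (deriv^[n] (CB_G μ)) {z : ℂ | |z.im| * c < Real.pi / 2} := by
  have hUopen : IsOpen {z : ℂ | |z.im| * c < Real.pi / 2} :=
    isOpen_lt (by fun_prop) continuous_const
  induction n with
  | zero =>
      refine DifferentiableOn.analyticOnNhd (fun z hz => ?_) hUopen
      exact (CB_G_diffAt hc μ hμ hz).differentiableWithinAt
  | succ n ih =>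
      rw [Function.iterate_succ_apply']
      exact ih.deriv

include hc hμ in
lemma CB_re_iter (n : ℕ) (t : ℝ) :
    iteratedDeriv n (fun s : ℝ => (CB_G μ s).re) t = (deriv^[n] (CB_G μ) t).re := by
  induction n generalizing t with
  | zero => simp
  | succ n ih =>
      rw [iteratedDeriv_succ]
      have hfun : iteratedDeriv n (fun s : ℝ => (CB_G μ s).re)
          = fun s : ℝ => (deriv^[n] (CB_G μ) s).re := funext fun s => ih s
      rw [hfun]
      have hU : ((t : ℂ)) ∈ {z : ℂ | |z.im| * c < Real.pi / 2} := by
        simp only [Set.mem_setOf_eq, Complex.ofReal_im, abs_zero, zero_mul]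
        positivity
      have hdiff : HasDerivAt (deriv^[n] (CB_G μ))
          (deriv (deriv^[n] (CB_G μ)) t) t :=
        ((CB_deriv_iter_analytic hc μ hμ n) _ hU).differentiableAt.hasDerivAt
      have h2 := hdiff.real_of_complex
      rw [h2.deriv, Function.iterate_succ_apply']

lemma CB_fact_le_pow_pred : ∀ m : ℕ, (m + 1).factorial ≤ (m + 1) ^ m := by
  intro m
  induction m with
  | zero => simp
  | succ m ih =>
      calc (m + 2).factorial = (m + 2) * (m + 1).factorial := rfl
        _ ≤ (m + 2) * (m + 1) ^ m := Nat.mul_le_mul_left _ ih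
        _ ≤ (m + 2) * (m + 2) ^ m := by
            exact Nat.mul_le_mul_left _ (Nat.pow_le_pow_left (by omega) m)
        _ = (m + 2) ^ (m + 1) := by rw [pow_succ, mul_comm]


end CBaux

/-- **Cumulant bound for compactly supported distributions**: if `μ` is a Borel probability
measure supported in `[-c, c]` and `K(t) = log ∫ e^{tx} dμ(x)` is its cumulant generating
function, then for every `k ≥ 1` the `k`-th cumulant `K^{(k)}(0)` satisfies
`|K^{(k)}(0)| ≤ (2ck)^k`. -/
theorem cumulant_bound_compact_support (c : ℝ) (hc : 0 < c)
    (μ : Measure ℝ) [IsProbabilityMeasure μ] (hμ : ∀ᵐ x ∂μ, x ∈ Icc (-c) c)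
    (K : ℝ → ℝ) (hK : K = fun t => Real.log (∫ x, Real.exp (t * x) ∂μ)) :
    ∀ k : ℕ, 1 ≤ k → |iteratedDeriv k K 0| ≤ (2 * c * k) ^ k := by
  intro k hk
  -- rewrite K via the complex function
  have hKre : K = fun t : ℝ => (CB_G μ t).re := by
    funext t
    rw [hK]
    show Real.log (∫ x, Real.exp (t * x) ∂μ) = _
    rw [CB_G, CB_F_ofReal μ hμ t, Complex.log_ofReal_re]
  have hiter : iteratedDeriv k K 0 = (deriv^[k] (CB_G μ) ((0:ℝ) : ℂ)).re := by
    rw [hKre]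
    exact CB_re_iter hc μ hμ k 0
  rcases eq_or_lt_of_le hk with h1 | h2
  · -- k = 1 : the cumulant is the mean
    subst hK
    have hk1 : k = 1 := h1.symm
    subst hk1
    set m : ℝ := ∫ x, x ∂μ with hm
    have hid_int : Integrable (fun x : ℝ => x) μ := by
      refine ⟨aestronglyMeasurable_id, HasFiniteIntegral.of_bounded (C := c) ?_⟩
      filter_upwards [hμ] with x hx
      rw [Real.norm_eq_abs]
      exact abs_le.2 ⟨hx.1, hx.2⟩
    have hm_le : |m| ≤ c := by
      calc |m| = ‖m‖ := (Real.norm_eq_abs m).symm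
        _ ≤ ∫ x, |x| ∂μ := by
            have := norm_integral_le_integral_norm (μ := μ) (f := fun x : ℝ => x)
            simpa [Real.norm_eq_abs] using this
        _ ≤ ∫ _, c ∂μ := by
            refine integral_mono_ae hid_int.abs (integrable_const _) ?_
            filter_upwards [hμ] with x hx
            exact abs_le.2 ⟨hx.1, hx.2⟩
        _ = c := by simp
    -- compute the derivative of G at 0
    have hF0 : CB_F μ 0 = 1 := by
      rw [CB_F]
      simp
    have hFd : HasDerivAt (CB_F μ) ((m : ℝ) : ℂ) 0 := by
      have h := CB_F_hasDerivAt hc μ hμ 0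
      have heq : (∫ x, (x : ℂ) * Complex.exp (0 * x) ∂μ) = ((m : ℝ) : ℂ) := by
        have h1 : ∀ x : ℝ, (x : ℂ) * Complex.exp (0 * x) = ((x : ℝ) : ℂ) := fun x => by
          simp
        rw [integral_congr_ae (.of_forall h1), hm]
        exact integral_ofReal
      rwa [heq] at h
    have hGd : HasDerivAt (CB_G μ) ((m : ℝ) : ℂ) 0 := by
      have hslit : CB_F μ 0 ∈ Complex.slitPlane := by
        rw [hF0]; exact Complex.one_mem_slitPlane
      have := hFd.clog hslit
      rw [hF0, div_one] at this
      exact this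
    have hD1 : deriv^[1] (CB_G μ) ((0:ℝ) : ℂ) = ((m : ℝ) : ℂ) := by
      simp only [Function.iterate_one, Complex.ofReal_zero]
      exact hGd.deriv
    rw [hiter, hD1]
    simp only [Complex.ofReal_re, pow_one, Nat.cast_one, mul_one]
    linarith [abs_nonneg m]
  · -- k ≥ 2 : Cauchy estimates
    have hk2 : 2 ≤ k := h2
    have hbound : ‖deriv^[k] (CB_G μ) ((0:ℝ) : ℂ)‖ ≤ (k.factorial : ℝ) * (6 * c ^ k) := by
      have := CB_iteratedDeriv_G_bound hc μ hμ k
      rw [iteratedDeriv_eq_iterate] at this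
      rwa [Complex.ofReal_zero]
    have habs : |iteratedDeriv k K 0| ≤ (k.factorial : ℝ) * (6 * c ^ k) := by
      rw [hiter]
      refine le_trans ?_ hbound
      exact Complex.abs_re_le_norm _
    refine habs.trans ?_
    -- numeric inequality : 6 * k! ≤ 2^k * k^k
    have hnat : k.factorial * 6 ≤ 2 ^ k * k ^ k := by
      obtain ⟨m, rfl⟩ : ∃ m, k = m + 1 := ⟨k - 1, by omega⟩
      have hfact : (m + 1).factorial ≤ (m + 1) ^ m := CB_fact_le_pow_pred m
      have h8 : 6 ≤ 2 ^ (m + 1) * (m + 1) := by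
        have h4 : 4 ≤ 2 ^ (m + 1) := by
          calc 4 = 2 ^ 2 := rfl
            _ ≤ 2 ^ (m + 1) := Nat.pow_le_pow_right (by norm_num) (by omega)
        calc 6 ≤ 4 * 2 := by norm_num
          _ ≤ 2 ^ (m + 1) * (m + 1) := Nat.mul_le_mul h4 (by omega)
      calc (m + 1).factorial * 6 ≤ (m + 1) ^ m * (2 ^ (m + 1) * (m + 1)) :=
            Nat.mul_le_mul hfact h8
        _ = 2 ^ (m + 1) * ((m + 1) ^ m * (m + 1)) := by ring
        _ = 2 ^ (m + 1) * (m + 1) ^ (m + 1) := by rw [← pow_succ]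
    have hnatR : (k.factorial : ℝ) * 6 ≤ 2 ^ k * (k : ℝ) ^ k := by
      have := hnat
      have h := (Nat.cast_le (α := ℝ)).2 this
      push_cast at h
      linarith
    have hck : (0:ℝ) ≤ c ^ k := by positivity
    calc (k.factorial : ℝ) * (6 * c ^ k) = ((k.factorial : ℝ) * 6) * c ^ k := by ring
      _ ≤ (2 ^ k * (k : ℝ) ^ k) * c ^ k := mul_le_mul_of_nonneg_right hnatR hck
      _ = (2 * c * (k : ℝ)) ^ k := by rw [mul_pow, mul_pow]; ring
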